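/- The unit root L-function satisfies the formal identity L_unit(κ, s) = L(Sym^{∞,κ} Kl, s) / L(Sym^{∞,κ-2} Kl, ps) for all κ ∈ Z_p, where L_unit(κ,s) = Π_t (1 - π_0(t)^κ s^{deg t})^{-1} and L(Sym^{∞,κ} Kl, s) = Π_t Π_{i=0}^{∞} (1 - π_0(t)^{κ-i}π_1(t)^i s^{deg t})^{-1}. -/

import Mathlib

open PowerSeries Finset

/-- The product (coefficientwise) topology on formal power series, from the topology of the
coefficient ring; infinite products of power series below are taken in this topology. -/
noncomputable instance powerSeriesTopology (R : Type*) [TopologicalSpace R] :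
    TopologicalSpace (PowerSeries R) :=
  inferInstanceAs (TopologicalSpace ((Unit →₀ ℕ) → R))

instance powerSeriesT2 (R : Type*) [TopologicalSpace R] [T2Space R] :
    T2Space (PowerSeries R) :=
  inferInstanceAs (T2Space ((Unit →₀ ℕ) → R))

instance powerSeriesContinuousMul (R : Type*) [CommSemiring R] [TopologicalSpace R]
    [IsTopologicalSemiring R] : ContinuousMul (PowerSeries R) := by
  constructor
  apply continuous_pi
  intro d
  have : (fun x : PowerSeries R × PowerSeries R => (x.1 * x.2) d) =
      fun x => ∑ p ∈ Finset.HasAntidiagonal.antidiagonal d, MvPowerSeries.coeff (R := R) p.1 x.1 *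
        MvPowerSeries.coeff (R := R) p.2 x.2 := by
    funext x
    exact MvPowerSeries.coeff_mul d x.1 x.2
  rw [this]
  exact continuous_finset_sum _ fun p _ =>
    ((continuous_apply p.1).comp continuous_fst).mul ((continuous_apply p.2).comp continuous_snd)

/-- Modelling the closed points of `𝔾_m/F_p` by an index type `I` with degree function `deg`,
let `π₀(t) ∈ ℤ_pˣ` be the unit root (a 1-unit, whose `ℤ_p`-powers are encoded by the
continuous homomorphisms `κ ↦ u t κ` restricting to the usual powers on `ℕ`) and `π₁(t)` the
non-unit root, with `π₀(t) π₁(t) = p^{deg t}`.  If `LU` is the product over `t` of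
`(1 - π₀(t)^κ s^{deg t})`, `Ln` the product over `(t, i)` of `(1 - π₀(t)^{κ-i} π₁(t)^i s^{deg t})`,
and `Ld` the product over `(t, i)` of `(1 - π₀(t)^{κ-2-i} π₁(t)^i p^{deg t} s^{deg t})`
(the denominator evaluated at `p s`), then `LU ⬝ Ld = Ln`; equivalently
`L_unit(κ, s) = L(Sym^{∞,κ} Kl, s) / L(Sym^{∞,κ-2} Kl, p s)`, the `L`-functions being the
inverses of these products. -/
theorem stmt9 (p : ℕ) [Fact p.Prime] (κ : ℤ_[p])
    (I : Type*) (deg : I → ℕ) (hdeg : ∀ t, 1 ≤ deg t)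
    (hfin : ∀ n : ℕ, {t : I | deg t = n}.Finite)
    (π₀ : I → ℤ_[p]ˣ) (π₁ : I → ℤ_[p])
    (hπ : ∀ t, (π₀ t : ℤ_[p]) * π₁ t = (p : ℤ_[p]) ^ deg t)
    (u : I → ℤ_[p] → ℤ_[p]ˣ)
    (hu_add : ∀ t a b, u t (a + b) = u t a * u t b)
    (hu_nat : ∀ t (n : ℕ), u t (n : ℤ_[p]) = π₀ t ^ n)
    (hu_cont : ∀ t, Continuous fun a => ((u t a : ℤ_[p]) : ℤ_[p]))
    (LU Ln Ld : PowerSeries ℤ_[p])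
    (hLU : HasProd (fun t : I =>
      1 - PowerSeries.C (R := ℤ_[p]) ((u t κ : ℤ_[p])) * X ^ deg t) LU)
    (hLn : HasProd (fun ti : I × ℕ =>
      1 - PowerSeries.C (R := ℤ_[p]) ((u ti.1 (κ - (ti.2 : ℕ)) : ℤ_[p]) * π₁ ti.1 ^ ti.2) *
        X ^ deg ti.1) Ln)
    (hLd : HasProd (fun ti : I × ℕ =>
      1 - PowerSeries.C (R := ℤ_[p]) ((u ti.1 (κ - 2 - (ti.2 : ℕ)) : ℤ_[p]) * π₁ ti.1 ^ ti.2 *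
          (p : ℤ_[p]) ^ deg ti.1) *
        X ^ deg ti.1) Ld) :
    LU * Ld = Ln := by
  classical
  set F : I × ℕ → PowerSeries ℤ_[p] := fun ti =>
    1 - PowerSeries.C (R := ℤ_[p]) ((u ti.1 (κ - (ti.2 : ℕ)) : ℤ_[p]) * π₁ ti.1 ^ ti.2) *
      X ^ deg ti.1 with hF
  set e : I × ℕ → I × ℕ := fun x => (x.1, x.2 + 1) with he
  have he_inj : Function.Injective e := by
    intro a b hab
    simp only [he, Prod.ext_iff] at hab
    exact Prod.ext hab.1 (by omega)
  -- key algebraic identity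
  have key : ∀ (t : I) (i : ℕ),
      ((u t (κ - ((i + 1 : ℕ) : ℤ_[p])) : ℤ_[p])) * π₁ t ^ (i + 1)
        = (u t (κ - 2 - (i : ℕ)) : ℤ_[p]) * π₁ t ^ i * (p : ℤ_[p]) ^ deg t := by
    intro t i
    have h1 : κ - ((i + 1 : ℕ) : ℤ_[p]) = (κ - 2 - (i : ℕ)) + 1 := by push_cast; ring
    have h3 : ((u t 1 : ℤ_[p])) = π₀ t := by
      have := hu_nat t 1
      rw [Nat.cast_one] at this
      rw [this, pow_one]
    rw [h1, hu_add, Units.val_mul, h3, pow_succ, ← hπ t]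
    ring
  -- Ld is the product over the range of e
  have hA : HasProd (F ∘ (Subtype.val : Set.range e → I × ℕ)) Ld := by
    have : HasProd (F ∘ e) Ld := by
      have hfe : F ∘ e = fun ti : I × ℕ =>
          1 - PowerSeries.C (R := ℤ_[p]) ((u ti.1 (κ - 2 - (ti.2 : ℕ)) : ℤ_[p]) * π₁ ti.1 ^ ti.2 *
            (p : ℤ_[p]) ^ deg ti.1) * X ^ deg ti.1 := by
        funext ti
        simp only [Function.comp, hF, he]
        rw [key ti.1 ti.2]
      rw [hfe]
      exact hLd
    exact (he_inj.hasProd_range_iff.mpr this : _)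
  -- LU is the product over the complement
  have hcompl : {x : I × ℕ | x.2 = 0} = (Set.range e)ᶜ := by
    ext ⟨t, i⟩
    simp only [Set.mem_setOf_eq, Set.mem_compl_iff, Set.mem_range, he, Prod.ext_iff, not_exists]
    constructor
    · rintro rfl ⟨a, b⟩ ⟨-, hb⟩; omega
    · intro h
      by_contra hi
      exact h (t, i - 1) ⟨rfl, by omega⟩
  let q : I ≃ {x : I × ℕ | x.2 = 0} :=
    { toFun := fun t => ⟨(t, 0), rfl⟩
      invFun := fun x => x.1.1
      left_inv := fun t => rfl
      right_inv := by
        rintro ⟨⟨t, i⟩, h⟩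
        simp only [Set.mem_setOf_eq] at h
        subst h
        rfl }
  have hB : HasProd (F ∘ (Subtype.val : {x : I × ℕ | x.2 = 0} → I × ℕ)) LU := by
    rw [← q.hasProd_iff]
    have : (F ∘ (Subtype.val : {x : I × ℕ | x.2 = 0} → I × ℕ)) ∘ q =
        fun t : I => 1 - PowerSeries.C (R := ℤ_[p]) ((u t κ : ℤ_[p])) * X ^ deg t := by
      funext t
      show 1 - PowerSeries.C (R := ℤ_[p]) ((u t (κ - ((0 : ℕ) : ℤ_[p])) : ℤ_[p]) * π₁ t ^ (0 : ℕ)) *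
          X ^ deg t = _
      rw [Nat.cast_zero, sub_zero, pow_zero, mul_one]
    rw [this]
    exact hLU
  have hiscompl : IsCompl (Set.range e) {x : I × ℕ | x.2 = 0} := by
    rw [hcompl]
    exact isCompl_compl
  have : HasProd F (Ld * LU) := hA.mul_isCompl hiscompl hB
  rw [mul_comm]
  exact this.unique hLn
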